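/- Let G be a finite group and let H, H' be subgroups of G. The following are equivalent: (i) for every element g of G, the number of elements of H that are conjugate in G to g equals the number of elements of H' that are conjugate in G to g; (ii) the induced characters Ind_H^G 1_H and Ind_{H'}^G 1_{H'} of the trivial characters of H and H' are equal as class functions on G (equivalently, the induced representations Ind_H^G 1 and Ind_{H'}^G 1 are isomorphic). -/

import Mathlib

open scoped Classical

/-- The class function on `G` induced from a function `χ` on a subgroup `H`:
`(Ind_H^G χ)(g) = (1/|H|) · Σ_{x ∈ G, x⁻¹gx ∈ H} χ(x⁻¹gx)`. -/
noncomputable def indFn {G : Type*} [Group G] (H : Subgroup G) (χ : H → ℂ) : G → ℂ :=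
  fun g => (Nat.card H : ℂ)⁻¹ *
    ∑ᶠ x : G, if h : x⁻¹ * g * x ∈ H then χ ⟨x⁻¹ * g * x, h⟩ else 0

section aux

variable {G : Type*} [Group G] [Fintype G]

/-- Counting: the set of conjugators into `H` decomposes as (conjugates in `H`) × centralizer. -/
lemma cardX_eq (H : Subgroup G) (g : G) :
    Nat.card {x : G // x⁻¹ * g * x ∈ H} =
      Nat.card {h : H // IsConj g (h : G)} * Nat.card {c : G // c⁻¹ * g * c = g} := by
  classical
  have hex : ∀ h : {h : H // IsConj g (h : G)}, ∃ x : G, x⁻¹ * g * x = (h : G) := by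
    rintro ⟨h, hh⟩
    obtain ⟨c, hc⟩ := isConj_iff.mp hh
    exact ⟨c⁻¹, by simpa using hc⟩
  choose s hs using hex
  have e : {x : G // x⁻¹ * g * x ∈ H} ≃
      {h : H // IsConj g (h : G)} × {c : G // c⁻¹ * g * c = g} := by
    refine
      { toFun := fun x =>
          (⟨⟨x.1⁻¹ * g * x.1, x.2⟩, isConj_iff.mpr ⟨x.1⁻¹, by group⟩⟩,
            ⟨x.1 * (s ⟨⟨x.1⁻¹ * g * x.1, x.2⟩, isConj_iff.mpr ⟨x.1⁻¹, by group⟩⟩)⁻¹, ?_⟩),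
        invFun := fun p => ⟨p.2.1 * s p.1, ?_⟩,
        left_inv := ?_, right_inv := ?_ }
    · set h : {h : H // IsConj g (h : G)} :=
        ⟨⟨x.1⁻¹ * g * x.1, x.2⟩, isConj_iff.mpr ⟨x.1⁻¹, by group⟩⟩ with hhdef
      have h1 : (s h)⁻¹ * g * s h = x.1⁻¹ * g * x.1 := hs h
      have : (x.1 * (s h)⁻¹)⁻¹ * g * (x.1 * (s h)⁻¹)
          = s h * (x.1⁻¹ * g * x.1) * (s h)⁻¹ := by group
      rw [this, ← h1]; group
    · have h1 : (s p.1)⁻¹ * g * s p.1 = (p.1 : G) := hs p.1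
      have h2 : p.2.1⁻¹ * g * p.2.1 = g := p.2.2
      have : (p.2.1 * s p.1)⁻¹ * g * (p.2.1 * s p.1)
          = (s p.1)⁻¹ * (p.2.1⁻¹ * g * p.2.1) * s p.1 := by group
      rw [this, h2, h1]; exact (p.1 : H).2
    · rintro ⟨x, hx⟩
      ext
      simp only [inv_mul_cancel_right]
    · rintro ⟨h, c⟩
      have h1 : (s h)⁻¹ * g * s h = (h : G) := hs h
      have h2 : c.1⁻¹ * g * c.1 = g := c.2
      have key : (c.1 * s h)⁻¹ * g * (c.1 * s h) = (h : G) := by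
        have : (c.1 * s h)⁻¹ * g * (c.1 * s h)
            = (s h)⁻¹ * (c.1⁻¹ * g * c.1) * s h := by group
        rw [this, h2, h1]
      have hfst : (⟨⟨(c.1 * s h)⁻¹ * g * (c.1 * s h), key ▸ (h : H).2⟩,
          isConj_iff.mpr ⟨(c.1 * s h)⁻¹, by group⟩⟩ : {h : H // IsConj g (h : G)}) = h := by
        ext; exact key
      refine Prod.ext ?_ ?_
      · exact hfst
      · simp only
        ext
        simp only
        rw [hfst]
        exact mul_inv_cancel_right _ _
  rw [Nat.card_congr e, Nat.card_prod]

lemma indFn_one_eq (H : Subgroup G) (g : G) :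
    indFn H (fun _ => (1 : ℂ)) g =
      (Nat.card H : ℂ)⁻¹ * (Nat.card {x : G // x⁻¹ * g * x ∈ H} : ℂ) := by
  classical
  unfold indFn
  rw [finsum_eq_sum_of_fintype]
  congr 1
  have : ∀ x : G, (if h : x⁻¹ * g * x ∈ H then (1 : ℂ) else 0)
      = if x⁻¹ * g * x ∈ H then (1 : ℂ) else 0 := fun x => by split <;> simp_all
  simp_rw [this, Finset.sum_boole, Nat.card_eq_fintype_card, Fintype.card_subtype]

lemma sum_cardX (H : Subgroup G) :
    ∑ g : G, Nat.card {x : G // x⁻¹ * g * x ∈ H} = Nat.card H * Fintype.card G := by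
  classical
  have h1 : ∀ g : G, Nat.card {x : G // x⁻¹ * g * x ∈ H}
      = ∑ x : G, if x⁻¹ * g * x ∈ H then 1 else 0 := by
    intro g
    rw [Nat.card_eq_fintype_card, Fintype.card_subtype, Finset.card_filter]
  simp_rw [h1]
  rw [Finset.sum_comm]
  have h2 : ∀ x : G, (∑ g : G, if x⁻¹ * g * x ∈ H then 1 else 0) = Nat.card H := by
    intro x
    have he : (∑ g : G, if x⁻¹ * g * x ∈ H then 1 else 0)
        = ∑ k : G, if k ∈ H then 1 else 0 := by
      apply Fintype.sum_equiv ((Equiv.mulRight x).trans (Equiv.mulLeft x⁻¹))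
      intro g
      simp [mul_assoc]
      congr
    rw [he, Nat.card_eq_fintype_card, Fintype.card_subtype, Finset.card_filter]
  simp_rw [h2, Finset.sum_const, Finset.card_univ, smul_eq_mul, mul_comm]

end aux

/-- **Gassmann equivalence via induced trivial characters.**
For a finite group `G` with subgroups `H`, `H'`, the condition that every `g : G` has the same
number of `G`-conjugates in `H` as in `H'` is equivalent to the equality of the characters
induced from the trivial characters of `H` and of `H'` (equivalently, by character theory,
to the isomorphy of the induced representations `Ind_H^G 1` and `Ind_{H'}^G 1`). -/
theorem gassmann_iff_ind_trivial_eq {G : Type*} [Group G] [Fintype G] (H H' : Subgroup G) :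
    (∀ g : G, Nat.card {h : H // IsConj g (h : G)} = Nat.card {h : H' // IsConj g (h : G)}) ↔
      indFn H (fun _ => 1) = indFn H' (fun _ => 1) := by
  classical
  constructor
  · intro hN
    have hX : ∀ g : G, Nat.card {x : G // x⁻¹ * g * x ∈ H}
        = Nat.card {x : G // x⁻¹ * g * x ∈ H'} := by
      intro g
      rw [cardX_eq, cardX_eq, hN g]
    have hcard : Nat.card H = Nat.card H' := by
      have := sum_cardX (G := G) H
      rw [Finset.sum_congr rfl (fun g _ => hX g), sum_cardX] at this
      exact (Nat.eq_of_mul_eq_mul_right Fintype.card_pos this).symm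
    funext g
    rw [indFn_one_eq, indFn_one_eq, hX g, hcard]
  · intro hInd
    have hval : ∀ g : G, (Nat.card H : ℂ)⁻¹ * (Nat.card {x : G // x⁻¹ * g * x ∈ H} : ℂ)
        = (Nat.card H' : ℂ)⁻¹ * (Nat.card {x : G // x⁻¹ * g * x ∈ H'} : ℂ) := by
      intro g
      rw [← indFn_one_eq, ← indFn_one_eq, hInd]
    -- evaluate at 1 to get |H| = |H'|
    have hone : ∀ (K : Subgroup G), Nat.card {x : G // x⁻¹ * (1 : G) * x ∈ K}
        = Fintype.card G := by
      intro K
      rw [Nat.card_eq_fintype_card, Fintype.card_subtype]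
      simp [one_mem]
    have hGne : (Fintype.card G : ℂ) ≠ 0 := by
      exact_mod_cast Fintype.card_pos.ne'
    have hcard : Nat.card H = Nat.card H' := by
      have h1 := hval 1
      rw [hone H, hone H'] at h1
      have h2 := mul_right_cancel₀ hGne h1
      have h3 : (Nat.card H : ℂ) = (Nat.card H' : ℂ) := by
        exact inv_injective h2
      exact_mod_cast h3
    intro g
    have hHne : ((Nat.card H : ℂ))⁻¹ ≠ 0 := by
      simp only [ne_eq, inv_eq_zero, Nat.cast_eq_zero]
      exact Nat.card_pos.ne'
    have h4 := hval g
    rw [← hcard] at h4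
    have h5 : (Nat.card {x : G // x⁻¹ * g * x ∈ H} : ℂ)
        = (Nat.card {x : G // x⁻¹ * g * x ∈ H'} : ℂ) := mul_left_cancel₀ hHne h4
    have h6 : Nat.card {x : G // x⁻¹ * g * x ∈ H}
        = Nat.card {x : G // x⁻¹ * g * x ∈ H'} := by exact_mod_cast h5
    rw [cardX_eq, cardX_eq] at h6
    have hCpos : 0 < Nat.card {c : G // c⁻¹ * g * c = g} := by
      have : Nonempty {c : G // c⁻¹ * g * c = g} := ⟨⟨1, by group⟩⟩
      exact Nat.card_pos
    exact Nat.eq_of_mul_eq_mul_right hCpos h6
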